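/- Let (T_t)_{t ≥ 0} be a strongly continuous semigroup of operators on a second countable Baire complex topological vector space X. Then (T_t)_{t ≥ 0} is diskcyclic (i.e., the set {T_t : t ≥ 0} is diskcyclic) if and only if (T_t)_{t ≥ 0} is disk transitive (i.e., the set {T_t : t ≥ 0} is disk transitive). -/

import Mathlib

open scoped NNReal Pointwise

private lemma mem_closure_zero_of_forall {X : Type*} [AddCommGroup X] [TopologicalSpace X]
    [IsTopologicalAddGroup X] {v : X} (h : ∀ M ∈ nhds (0 : X), v ∈ closure M) :
    v ∈ closure ({0} : Set X) := by
  have hmem : ∀ M ∈ nhds (0 : X), v ∈ M := by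
    intro M hM
    obtain ⟨M', hM', hM'add⟩ := exists_nhds_zero_half hM
    have hv := h M' hM'
    have hS : {w : X | v - w ∈ M'} ∈ nhds v := by
      have hc : ContinuousAt (fun w : X => v - w) v :=
        (continuous_const.sub continuous_id).continuousAt
      have := hc.preimage_mem_nhds (by simpa using hM')
      exact this
    obtain ⟨w, hw1, hw2⟩ := mem_closure_iff_nhds.mp hv _ hS
    have := hM'add _ hw1 _ hw2
    simpa using this
  rw [mem_closure_iff_nhds]
  intro N hN
  have hM : {w : X | v - w ∈ N} ∈ nhds (0 : X) := by
    have hc : ContinuousAt (fun w : X => v - w) 0 :=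
      (continuous_const.sub continuous_id).continuousAt
    have := hc.preimage_mem_nhds (by simpa using hN)
    exact this
  have := hmem _ hM
  exact ⟨0, by simpa using this, rfl⟩

private lemma not_open_subset_closure_zero {X : Type*} [AddCommGroup X] [Module ℂ X]
    [TopologicalSpace X] [IsTopologicalAddGroup X] [ContinuousSMul ℂ X]
    (hZ : (closure ({0} : Set X)) ≠ Set.univ) {O : Set X} (hO : IsOpen O)
    (hne : O.Nonempty) : ¬ O ⊆ closure ({0} : Set X) := by
  intro hsub
  apply hZ
  set Z : Submodule ℂ X := (⊥ : Submodule ℂ X).topologicalClosure with hZdef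
  have hZcoe : (Z : Set X) = closure ({0} : Set X) := by
    simp [hZdef, Submodule.topologicalClosure_coe]
  obtain ⟨p, hp⟩ := hne
  rw [Set.eq_univ_iff_forall]
  intro y
  have hcont : Continuous fun ε : ℂ => p + ε • y :=
    continuous_const.add (continuous_id.smul continuous_const)
  have hpre : (fun ε : ℂ => p + ε • y) ⁻¹' O ∈ nhds (0 : ℂ) :=
    hcont.continuousAt.preimage_mem_nhds (by simpa using hO.mem_nhds hp)
  obtain ⟨δ, hδ, hball⟩ := Metric.mem_nhds_iff.mp hpre
  set ε : ℂ := ((δ / 2 : ℝ) : ℂ) with hεdef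
  have hεne : ε ≠ 0 := by
    rw [hεdef]
    exact_mod_cast (by positivity : (δ / 2 : ℝ) ≠ 0)
  have hεmem : ε ∈ Metric.ball (0 : ℂ) δ := by
    rw [Metric.mem_ball, dist_zero_right, hεdef, Complex.norm_real,
      Real.norm_eq_abs, abs_of_pos (by positivity)]
    linarith
  have hin : p + ε • y ∈ O := hball hεmem
  have hpZ : p ∈ Z := by rw [← SetLike.mem_coe, hZcoe]; exact hsub hp
  have hqZ : p + ε • y ∈ Z := by rw [← SetLike.mem_coe, hZcoe]; exact hsub hin
  have h1 : ε • y ∈ Z := by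
    have := Z.sub_mem hqZ hpZ
    simpa using this
  have h2 : y ∈ Z := by
    have := Z.smul_mem ε⁻¹ h1
    rwa [inv_smul_smul₀ hεne] at this
  rw [← hZcoe]
  exact h2

/-- A strongly continuous semigroup of operators on a second countable Baire complex
topological vector space is diskcyclic if and only if it is disk transitive. -/
theorem stmt_16 {X : Type*} [AddCommGroup X] [Module ℂ X] [TopologicalSpace X]
    [IsTopologicalAddGroup X] [ContinuousSMul ℂ X] [SecondCountableTopology X]
    [BaireSpace X]
    (T : ℝ≥0 → X →L[ℂ] X)
    (hT0 : T 0 = ContinuousLinearMap.id ℂ X)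
    (hTadd : ∀ t s : ℝ≥0, T (t + s) = T t ∘L T s)
    (hTcont : ∀ x : X, Continuous fun t : ℝ≥0 => T t x) :
    (∃ x : X, Dense {y : X | ∃ α : ℂ, ‖α‖ ≤ 1 ∧ ∃ t : ℝ≥0, y = α • T t x}) ↔
    (∀ U V : Set X, IsOpen U → IsOpen V → U.Nonempty → V.Nonempty →
      ∃ α : ℂ, α ≠ 0 ∧ ‖α‖ ≤ 1 ∧ ∃ t : ℝ≥0, (⇑(T t) '' (α • U) ∩ V).Nonempty) := by
  constructor
  · rintro ⟨x, hx⟩ U V hU hV hUne hVne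
    by_cases hZ : (closure ({0} : Set X)) = Set.univ
    · have h0U : (0 : X) ∈ U := by
        obtain ⟨u, hu⟩ := hUne
        have hucl : u ∈ closure ({0} : Set X) := hZ ▸ Set.mem_univ u
        obtain ⟨w, hw1, hw2⟩ := mem_closure_iff_nhds.mp hucl U (hU.mem_nhds hu)
        rw [Set.mem_singleton_iff] at hw2
        rwa [hw2] at hw1
      have h0V : (0 : X) ∈ V := by
        obtain ⟨u, hu⟩ := hVne
        have hucl : u ∈ closure ({0} : Set X) := hZ ▸ Set.mem_univ u
        obtain ⟨w, hw1, hw2⟩ := mem_closure_iff_nhds.mp hucl V (hV.mem_nhds hu)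
        rw [Set.mem_singleton_iff] at hw2
        rwa [hw2] at hw1
      refine ⟨1, one_ne_zero, by norm_num, 0, ⟨0, ⟨(1 : ℂ) • (0 : X),
        Set.smul_mem_smul_set h0U, by simp [hT0]⟩, h0V⟩⟩
    · have hnsub : ∀ O : Set X, IsOpen O → O.Nonempty → ¬ O ⊆ closure ({0} : Set X) :=
        fun O hO hOne => not_open_subset_closure_zero hZ hO hOne
      have hU'ne : (U \ closure ({0} : Set X)).Nonempty :=
        Set.diff_nonempty.mpr (hnsub U hU hUne)
      have hU'o : IsOpen (U \ closure ({0} : Set X)) := hU.sdiff isClosed_closure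
      have hV'ne : (V \ closure ({0} : Set X)).Nonempty :=
        Set.diff_nonempty.mpr (hnsub V hV hVne)
      have hV'o : IsOpen (V \ closure ({0} : Set X)) := hV.sdiff isClosed_closure
      obtain ⟨y, hyU', hyD⟩ := dense_iff_inter_open.mp hx _ hU'o hU'ne
      obtain ⟨β, hβ1, s, rfl⟩ := hyD
      have hβ0 : β ≠ 0 := by
        rintro rfl
        exact hyU'.2 (by simpa using subset_closure (Set.mem_singleton (0 : X)))
      have hβpos : 0 < ‖β‖ := norm_pos_iff.mpr hβ0
      have claim : ∃ γ : ℂ, ∃ r : ℝ≥0, ‖γ‖ ≤ ‖β‖ ∧ s ≤ r ∧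
          γ • T r x ∈ V \ closure ({0} : Set X) := by
        by_contra hcon
        push_neg at hcon
        obtain ⟨v, hvV, hvZ⟩ := hV'ne
        apply hvZ
        apply mem_closure_zero_of_forall
        intro M hM
        have hM'o : IsOpen (interior M) := isOpen_interior
        have hM'0 : (0 : X) ∈ interior M := mem_interior_iff_mem_nhds.mpr hM
        have hF : Continuous fun p : ℂ × ℝ≥0 => p.1 • T p.2 x :=
          continuous_fst.smul ((hTcont x).comp continuous_snd)
        have hsub0 : ({(0 : ℂ)} : Set ℂ) ×ˢ (Set.Icc 0 s) ⊆
            (fun p : ℂ × ℝ≥0 => p.1 • T p.2 x) ⁻¹' interior M := by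
          rintro ⟨γ, r⟩ ⟨hγ, -⟩
          rw [Set.mem_singleton_iff] at hγ
          subst hγ
          show (0 : ℂ) • T r x ∈ interior M
          rw [zero_smul]
          exact hM'0
        obtain ⟨vset, wset, hvo, hwo, h0v, hIw, hvwsub⟩ :=
          generalized_tube_lemma isCompact_singleton isCompact_Icc (hM'o.preimage hF) hsub0
        obtain ⟨δ, hδpos, hδball⟩ := Metric.mem_nhds_iff.mp (hvo.mem_nhds (h0v rfl))
        set θ : ℝ := min (δ / 2) ‖β‖ with hθdef
        have hθpos : 0 < θ := lt_min (by positivity) hβpos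
        have hθc : ((θ : ℝ) : ℂ) ≠ 0 := by exact_mod_cast hθpos.ne'
        rw [mem_closure_iff_nhds]
        intro N hN
        have hO : IsOpen (interior N ∩ (V \ closure ({0} : Set X))) :=
          isOpen_interior.inter hV'o
        have hvO : v ∈ interior N ∩ (V \ closure ({0} : Set X)) :=
          ⟨mem_interior_iff_mem_nhds.mpr hN, hvV, hvZ⟩
        have hO' : IsOpen (((θ : ℂ))⁻¹ • (interior N ∩ (V \ closure ({0} : Set X)))) :=
          hO.smul₀ (inv_ne_zero hθc)
        obtain ⟨y, hyO', hyD⟩ := dense_iff_inter_open.mp hx _ hO'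
          ⟨_, Set.smul_mem_smul_set hvO⟩
        obtain ⟨α, hα1, t, rfl⟩ := hyD
        have hz : ((θ : ℂ) * α) • T t x ∈ interior N ∩ (V \ closure ({0} : Set X)) := by
          obtain ⟨w, hw, hweq⟩ := hyO'
          rw [← smul_smul, ← hweq, smul_inv_smul₀ hθc]
          exact hw
        have hθnorm : ‖((θ : ℝ) : ℂ)‖ = θ := by
          rw [Complex.norm_real, Real.norm_eq_abs, abs_of_pos hθpos]
        have hnorm : ‖(θ : ℂ) * α‖ ≤ θ := by
          rw [norm_mul, hθnorm]
          calc θ * ‖α‖ ≤ θ * 1 := by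
                exact mul_le_mul_of_nonneg_left hα1 hθpos.le
            _ = θ := mul_one θ
        rcases le_total s t with hst | hts
        · exact absurd hz.2 (hcon _ _ (hnorm.trans (min_le_right _ _)) hst)
        · have hmemp : ((θ : ℂ) * α, t) ∈ vset ×ˢ wset := by
            constructor
            · apply hδball
              rw [mem_ball_zero_iff]
              calc ‖(θ : ℂ) * α‖ ≤ θ := hnorm
                _ ≤ δ / 2 := min_le_left _ _
                _ < δ := by linarith
            · exact hIw ⟨zero_le (a := t), hts⟩
          have hmem := hvwsub hmemp
          exact ⟨_, interior_subset hz.1, interior_subset hmem⟩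
      obtain ⟨γ, r, hγβ, hsr, hmem⟩ := claim
      have hγ0 : γ ≠ 0 := by
        rintro rfl
        exact hmem.2 (by simpa using subset_closure (Set.mem_singleton (0 : X)))
      refine ⟨γ / β, div_ne_zero hγ0 hβ0, ?_, r - s, ?_⟩
      · rw [norm_div]
        exact (div_le_one hβpos).mpr hγβ
      · refine ⟨γ • T r x, ⟨(γ / β) • (β • T s x), Set.smul_mem_smul_set hyU'.1, ?_⟩, hmem.1⟩
        rw [map_smul, map_smul]
        have hTr : T (r - s) (T s x) = T r x := by
          have := hTadd (r - s) s
          rw [tsub_add_cancel_of_le hsr] at this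
          rw [this]
          rfl
        rw [hTr, smul_smul, div_mul_cancel₀ γ hβ0]
  · intro htrans
    obtain ⟨b, hbc, hbne, hb⟩ := TopologicalSpace.exists_countable_basis X
    set G : Set X → Set X := fun V =>
      ⋃ (α : ℂ) (_ : ‖α‖ ≤ 1) (t : ℝ≥0), (fun x => α • T t x) ⁻¹' V with hGdef
    have hGopen : ∀ V ∈ b, IsOpen (G V) := by
      intro V hV
      exact isOpen_iUnion fun α => isOpen_iUnion fun _ => isOpen_iUnion fun t =>
        (hb.isOpen hV).preimage ((T t).continuous.const_smul α)
    have hGdense : ∀ V ∈ b, Dense (G V) := by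
      intro V hVb
      rw [dense_iff_inter_open]
      intro U hU hUne
      have hVne : V.Nonempty := by
        rcases Set.eq_empty_or_nonempty V with h | h
        · exact absurd (h ▸ hVb) hbne
        · exact h
      obtain ⟨α, hα0, hα1, t, w, hwmem, hwV⟩ := htrans U V hU (hb.isOpen hVb) hUne hVne
      obtain ⟨z, hz, rfl⟩ := hwmem
      obtain ⟨u, hu, rfl⟩ := hz
      refine ⟨u, hu, ?_⟩
      rw [hGdef]
      simp only [Set.mem_iUnion]
      exact ⟨α, hα1, t, by simpa [map_smul] using hwV⟩
    have hdense : Dense (⋂ V ∈ b, G V) :=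
      dense_biInter_of_isOpen hGopen hbc hGdense
    have : Nonempty X := ⟨0⟩
    obtain ⟨x, hx⟩ := hdense.nonempty
    refine ⟨x, ?_⟩
    rw [dense_iff_inter_open]
    intro O hO hOne
    obtain ⟨p, hp⟩ := hOne
    obtain ⟨V, hVb, hpV, hVO⟩ := hb.exists_subset_of_mem_open hp hO
    have hxG : x ∈ G V := by
      have := Set.mem_iInter₂.mp hx V hVb
      exact this
    rw [hGdef] at hxG
    simp only [Set.mem_iUnion] at hxG
    obtain ⟨α, hα1, t, hmem⟩ := hxG
    exact ⟨α • T t x, hVO hmem, ⟨α, hα1, t, rfl⟩⟩
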